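/- With Z* the block matrix whose (C_l,C_l) blocks are I/|C_l| and (C_i,C_j) blocks are E/(|C_i||C_j|) for i≠j, the range of Z* equals J = {x ∈ ℝ^V : ⟨x, 1_{C_1}⟩ = ... = ⟨x, 1_{C_k}⟩}; in particular Z* is positive semidefinite of rank |V| − k + 1. -/

import Mathlib

open Matrix Finset

/-- The block matrix `Z*`: diagonal blocks `I/|C_l|`, off-diagonal `(C_i,C_j)` blocks
all-ones scaled by `1/(|C_i||C_j|)`.  `π` assigns each vertex to its part. -/
noncomputable def Zstar {V : Type*} [Fintype V] [DecidableEq V] {k : ℕ}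
    (C : Fin k → Finset V) (π : V → Fin k) : Matrix V V ℝ :=
  Matrix.of fun a b =>
    if π a = π b then (if a = b then ((C (π a)).card : ℝ)⁻¹ else 0)
    else (((C (π a)).card : ℝ) * ((C (π b)).card : ℝ))⁻¹

section Aux
variable {V : Type*} [Fintype V] [DecidableEq V] {k : ℕ}
  (C : Fin k → Finset V) (π : V → Fin k)
  (hdisj : ∀ i j : Fin k, i ≠ j → Disjoint (C i) (C j))
  (hne : ∀ l : Fin k, (C l).Nonempty)
  (hπ : ∀ v : V, v ∈ C (π v))

include hdisj hπ in
lemma mem_iff {v : V} {l : Fin k} : v ∈ C l ↔ π v = l := by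
  constructor
  · intro hv
    by_contra h
    exact (Finset.disjoint_left.mp (hdisj _ _ h)) (hπ v) hv
  · rintro rfl; exact hπ v

include hdisj hπ in
lemma filter_eq (l : Fin k) : Finset.univ.filter (fun v => π v = l) = C l := by
  ext v; simp [mem_iff C π hdisj hπ]

include hdisj hπ in
lemma sum_fiber (f : V → ℝ) : ∑ v, f v = ∑ l, ∑ v ∈ C l, f v := by
  rw [← Finset.sum_fiberwise Finset.univ π f]
  exact Finset.sum_congr rfl fun l _ => by rw [filter_eq C π hdisj hπ]

include hne in
lemma n_pos (l : Fin k) : (0:ℝ) < ((C l).card : ℝ) := by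
  exact_mod_cast Finset.card_pos.mpr (hne l)

omit hdisj hπ in
lemma dot_ind (x : V → ℝ) (l : Fin k) :
    x ⬝ᵥ (fun v => if v ∈ C l then (1:ℝ) else 0) = ∑ v ∈ C l, x v := by
  simp only [dotProduct, mul_ite, mul_one, mul_zero]
  rw [Finset.sum_ite_mem, Finset.univ_inter]

include hdisj hπ in
lemma mulVec_apply (x : V → ℝ) (a : V) :
    (Zstar C π).mulVec x a
      = x a / ((C (π a)).card : ℝ)
        + ∑ j ∈ Finset.univ.erase (π a),
            (∑ b ∈ C j, x b) / (((C (π a)).card : ℝ) * ((C j).card : ℝ)) := by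
  have key : (Zstar C π).mulVec x a = ∑ b, Zstar C π a b * x b := by
    simp [Matrix.mulVec, dotProduct]
  rw [key, sum_fiber C π hdisj hπ (fun b => Zstar C π a b * x b)]
  rw [← Finset.add_sum_erase Finset.univ _ (Finset.mem_univ (π a))]
  congr 1
  · have : ∀ b ∈ C (π a), Zstar C π a b * x b = if a = b then x b / ((C (π a)).card : ℝ) else 0 := by
      intro b hb
      have hpb : π b = π a := (mem_iff C π hdisj hπ).mp hb
      have hz : Zstar C π a b = if a = b then ((C (π a)).card : ℝ)⁻¹ else 0 := by
        simp only [Zstar, Matrix.of_apply]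
        rw [hpb, if_pos rfl]
      rw [hz]
      split <;> simp [div_eq_inv_mul, mul_comm]
    rw [Finset.sum_congr rfl this, Finset.sum_ite_eq (C (π a)) a (fun b => x b / ((C (π a)).card : ℝ)),
      if_pos (hπ a)]
  · refine Finset.sum_congr rfl fun l hl => ?_
    have hl' : l ≠ π a := Finset.ne_of_mem_erase hl
    have : ∀ b ∈ C l, Zstar C π a b * x b
        = x b / (((C (π a)).card : ℝ) * ((C l).card : ℝ)) := by
      intro b hb
      have hpb : π b = l := (mem_iff C π hdisj hπ).mp hb
      have hne2 : π a ≠ π b := by rw [hpb]; exact (Ne.symm hl')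
      have hz : Zstar C π a b = (((C (π a)).card : ℝ) * ((C l).card : ℝ))⁻¹ := by
        simp only [Zstar, Matrix.of_apply]
        rw [if_neg hne2, hpb]
      rw [hz, div_eq_inv_mul]
    rw [Finset.sum_congr rfl this, ← Finset.sum_div]

include hdisj hne hπ in
lemma sum_block (x : V → ℝ) (l : Fin k) :
    ∑ a ∈ C l, (Zstar C π).mulVec x a
      = ∑ j, (∑ b ∈ C j, x b) / ((C j).card : ℝ) := by
  have hnl : ((C l).card : ℝ) ≠ 0 := ne_of_gt (n_pos C hne l)
  have h1 : ∀ a ∈ C l, (Zstar C π).mulVec x a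
      = x a / ((C l).card : ℝ)
        + ∑ j ∈ Finset.univ.erase l,
            (∑ b ∈ C j, x b) / (((C l).card : ℝ) * ((C j).card : ℝ)) := by
    intro a ha
    rw [mulVec_apply C π hdisj hπ x a]
    rw [(mem_iff C π hdisj hπ).mp ha]
  rw [Finset.sum_congr rfl h1, Finset.sum_add_distrib, ← Finset.sum_div, Finset.sum_const,
    nsmul_eq_mul, Finset.mul_sum]
  have h2 : ∀ j ∈ Finset.univ.erase l,
      ((C l).card : ℝ) * ((∑ b ∈ C j, x b) / (((C l).card : ℝ) * ((C j).card : ℝ)))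
        = (∑ b ∈ C j, x b) / ((C j).card : ℝ) := by
    intro j _
    rw [mul_div_assoc', mul_div_mul_left _ _ hnl]
  rw [Finset.sum_congr rfl h2,
    ← Finset.add_sum_erase Finset.univ (fun j => (∑ b ∈ C j, x b) / ((C j).card : ℝ))
      (Finset.mem_univ l)]

include hdisj hne hπ in
lemma range_eq (hk : 0 < k) :
    Set.range ((Zstar C π).mulVec) =
      {x : V → ℝ | ∀ l : Fin k, x ⬝ᵥ (fun v => if v ∈ C l then (1:ℝ) else 0)
          = x ⬝ᵥ (fun v => if v ∈ C ⟨0, hk⟩ then (1:ℝ) else 0)} := by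
  have hk0 : (k : ℝ) ≠ 0 := Nat.cast_ne_zero.mpr hk.ne'
  ext x
  simp only [Set.mem_range, Set.mem_setOf_eq]
  constructor
  · rintro ⟨y, rfl⟩ l
    rw [dot_ind C _ l, dot_ind C _ ⟨0, hk⟩,
      sum_block C π hdisj hne hπ y l, sum_block C π hdisj hne hπ y ⟨0, hk⟩]
  · intro hx
    set T := ∑ v ∈ C ⟨0, hk⟩, x v with hTdef
    have hT : ∀ l, ∑ v ∈ C l, x v = T := by
      intro l
      have := hx l
      rwa [dot_ind C x l, dot_ind C x ⟨0, hk⟩] at this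
    set y : V → ℝ := fun a => ((C (π a)).card : ℝ) * x a - (k - 1) * T / k with hy
    refine ⟨y, funext fun a => ?_⟩
    have hna : ((C (π a)).card : ℝ) ≠ 0 := ne_of_gt (n_pos C hne (π a))
    rw [mulVec_apply C π hdisj hπ]
    have hS : ∀ j, ∑ b ∈ C j, y b = ((C j).card : ℝ) * T / k := by
      intro j
      have h1 : ∀ b ∈ C j, y b = ((C j).card : ℝ) * x b - (k - 1) * T / k := by
        intro b hb
        rw [hy]
        simp only
        rw [(mem_iff C π hdisj hπ).mp hb]
      rw [Finset.sum_congr rfl h1, Finset.sum_sub_distrib, ← Finset.mul_sum, hT j,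
        Finset.sum_const, nsmul_eq_mul]
      field_simp
      ring
    have h2 : ∀ j ∈ Finset.univ.erase (π a),
        (∑ b ∈ C j, y b) / (((C (π a)).card : ℝ) * ((C j).card : ℝ))
          = T / (k * ((C (π a)).card : ℝ)) := by
      intro j _
      have hnj : ((C j).card : ℝ) ≠ 0 := ne_of_gt (n_pos C hne j)
      rw [hS j]
      field_simp
    rw [Finset.sum_congr rfl h2, Finset.sum_const, Finset.card_erase_of_mem (Finset.mem_univ _),
      Finset.card_univ, Fintype.card_fin, nsmul_eq_mul]
    have hy2 : y a = ((C (π a)).card : ℝ) * x a - (k - 1) * T / k := rfl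
    rw [hy2, Nat.cast_sub hk, Nat.cast_one]
    field_simp
    ring

omit hdisj hne hπ in
lemma zstar_symm : (Zstar C π).IsHermitian := by
  have key : ∀ a b, Zstar C π a b = Zstar C π b a := by
    intro a b
    simp only [Zstar, Matrix.of_apply]
    by_cases hp : π a = π b
    · rw [if_pos hp, if_pos hp.symm, hp]
      by_cases hab : a = b
      · rw [if_pos hab, if_pos hab.symm]
      · rw [if_neg hab, if_neg (Ne.symm hab)]
    · rw [if_neg hp, if_neg (fun h => hp h.symm), mul_comm]
  show (Zstar C π)ᴴ = Zstar C π
  ext a b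
  rw [Matrix.conjTranspose_apply, star_trivial]
  exact key b a

include hdisj hne hπ in
lemma zstar_psd : (Zstar C π).PosSemidef := by
  refine Matrix.PosSemidef.of_dotProduct_mulVec_nonneg (zstar_symm C π) fun x => ?_
  have hsx : star x = x := by simp
  rw [hsx]
  set u : Fin k → ℝ := fun l => (∑ v ∈ C l, x v) / ((C l).card : ℝ) with hu
  set U : ℝ := ∑ l, u l with hU
  have block : ∀ l, ∑ a ∈ C l, x a * (Zstar C π).mulVec x a
      = (∑ a ∈ C l, x a ^ 2) / ((C l).card : ℝ) + u l * (U - u l) := by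
    intro l
    have hnl : (0:ℝ) < ((C l).card : ℝ) := n_pos C hne l
    have h1 : ∀ a ∈ C l, x a * (Zstar C π).mulVec x a
        = x a ^ 2 / ((C l).card : ℝ)
          + x a * ∑ j ∈ Finset.univ.erase l,
              (∑ b ∈ C j, x b) / (((C l).card : ℝ) * ((C j).card : ℝ)) := by
      intro a ha
      rw [mulVec_apply C π hdisj hπ, (mem_iff C π hdisj hπ).mp ha, mul_add]
      ring
    rw [Finset.sum_congr rfl h1, Finset.sum_add_distrib, ← Finset.sum_div, ← Finset.sum_mul]
    congr 1
    have h2 : ∀ j ∈ Finset.univ.erase l,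
        (∑ b ∈ C j, x b) / (((C l).card : ℝ) * ((C j).card : ℝ)) = u j / ((C l).card : ℝ) := by
      intro j _
      rw [hu]
      simp only
      rw [div_div, mul_comm]
    rw [Finset.sum_congr rfl h2, ← Finset.sum_div, Finset.sum_erase_eq_sub (Finset.mem_univ l), ← hU]
    rw [hu]
    simp only
    field_simp
  have expand : x ⬝ᵥ (Zstar C π).mulVec x
      = ∑ l, ((∑ a ∈ C l, x a ^ 2) / ((C l).card : ℝ) + u l * (U - u l)) := by
    rw [dotProduct, sum_fiber C π hdisj hπ (fun a => x a * (Zstar C π).mulVec x a)]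
    exact Finset.sum_congr rfl fun l _ => block l
  rw [expand]
  have key : ∑ l, ((∑ a ∈ C l, x a ^ 2) / ((C l).card : ℝ) + u l * (U - u l))
      = (∑ l, ((∑ a ∈ C l, x a ^ 2) / ((C l).card : ℝ) - u l ^ 2)) + U ^ 2 := by
    rw [Finset.sum_add_distrib, Finset.sum_sub_distrib]
    have h3 : ∀ l ∈ Finset.univ, u l * (U - u l) = u l * U - u l ^ 2 := fun l _ => by ring
    rw [Finset.sum_congr rfl h3, Finset.sum_sub_distrib, ← Finset.sum_mul, ← hU]
    ring
  rw [key]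
  apply add_nonneg _ (sq_nonneg U)
  apply Finset.sum_nonneg
  intro l _
  have hnl : (0:ℝ) < ((C l).card : ℝ) := n_pos C hne l
  have cs : (∑ a ∈ C l, x a) ^ 2 ≤ ((C l).card : ℝ) * ∑ a ∈ C l, x a ^ 2 :=
    sq_sum_le_card_mul_sum_sq
  have hu2 : u l ^ 2 ≤ (∑ a ∈ C l, x a ^ 2) / ((C l).card : ℝ) := by
    rw [hu]
    simp only
    rw [div_pow, div_le_div_iff₀ (by positivity) hnl]
    nlinarith [mul_le_mul_of_nonneg_right cs hnl.le]
  linarith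

end Aux

noncomputable def phiMap {V : Type*} [Fintype V] [DecidableEq V] {k : ℕ}
    (C : Fin k → Finset V) (i0 : Fin k) : (V → ℝ) →ₗ[ℝ] (Fin k → ℝ) where
  toFun x := fun l => (x ⬝ᵥ fun v => if v ∈ C l then (1:ℝ) else 0)
      - (x ⬝ᵥ fun v => if v ∈ C i0 then (1:ℝ) else 0)
  map_add' x y := by
    funext l
    simp only [add_dotProduct, Pi.add_apply]
    ring
  map_smul' c x := by
    funext l
    simp only [smul_dotProduct, smul_eq_mul, RingHom.id_apply, Pi.smul_apply]
    ring

theorem stmt5 {V : Type*} [Fintype V] [DecidableEq V] {k : ℕ} (hk : 0 < k)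
    (C : Fin k → Finset V)
    (hdisj : ∀ i j : Fin k, i ≠ j → Disjoint (C i) (C j))
    (hne : ∀ l : Fin k, (C l).Nonempty)
    (π : V → Fin k) (hπ : ∀ v : V, v ∈ C (π v)) :
    (Set.range ((Zstar C π).mulVec) =
        {x : V → ℝ | ∀ l : Fin k, x ⬝ᵥ (fun v => if v ∈ C l then (1:ℝ) else 0)
          = x ⬝ᵥ (fun v => if v ∈ C ⟨0, hk⟩ then (1:ℝ) else 0)})
    ∧ (Zstar C π).PosSemidef
    ∧ (Zstar C π).rank = Fintype.card V - k + 1 := by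
  classical
  have hrange := range_eq C π hdisj hne hπ hk
  refine ⟨hrange, zstar_psd C π hdisj hne hπ, ?_⟩
  set i0 : Fin k := ⟨0, hk⟩ with hi0
  set φ := phiMap C i0 with hφ
  have hker : LinearMap.range ((Zstar C π).mulVecLin) = LinearMap.ker φ := by
    ext x
    rw [LinearMap.mem_range, LinearMap.mem_ker]
    constructor
    · rintro ⟨y, rfl⟩
      have hx : (Zstar C π).mulVec y ∈ {x : V → ℝ | ∀ l : Fin k,
          x ⬝ᵥ (fun v => if v ∈ C l then (1:ℝ) else 0)
            = x ⬝ᵥ (fun v => if v ∈ C ⟨0, hk⟩ then (1:ℝ) else 0)} := by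
        rw [← hrange]; exact Set.mem_range_self y
      funext l
      simpa [hφ, phiMap, Matrix.mulVecLin_apply, sub_eq_zero, hi0] using hx l
    · intro h
      have hx : x ∈ {x : V → ℝ | ∀ l : Fin k,
          x ⬝ᵥ (fun v => if v ∈ C l then (1:ℝ) else 0)
            = x ⬝ᵥ (fun v => if v ∈ C ⟨0, hk⟩ then (1:ℝ) else 0)} := by
        intro l
        have := congrFun h l
        simpa [hφ, phiMap, sub_eq_zero, hi0] using this
      rw [← hrange] at hx
      obtain ⟨y, hy⟩ := hx
      exact ⟨y, by rw [Matrix.mulVecLin_apply, hy]⟩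
  have hprojker : LinearMap.range φ
      = LinearMap.ker (LinearMap.proj (R := ℝ) (φ := fun _ : Fin k => ℝ) i0) := by
    ext t
    rw [LinearMap.mem_range, LinearMap.mem_ker]
    constructor
    · rintro ⟨x, rfl⟩
      simp [hφ, phiMap, LinearMap.proj]
    · intro ht
      have ht0 : t i0 = 0 := ht
      refine ⟨fun v => t (π v) / ((C (π v)).card : ℝ), ?_⟩
      have hdl : ∀ l' : Fin k,
          ((fun v => t (π v) / ((C (π v)).card : ℝ)) ⬝ᵥ
            (fun v => if v ∈ C l' then (1:ℝ) else 0)) = t l' := by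
        intro l'
        rw [dot_ind C _ l']
        have h1 : ∀ v ∈ C l', t (π v) / ((C (π v)).card : ℝ)
            = t l' / ((C l').card : ℝ) := by
          intro v hv
          rw [(mem_iff C π hdisj hπ).mp hv]
        rw [Finset.sum_congr rfl h1, Finset.sum_const, nsmul_eq_mul]
        have hnl : ((C l').card : ℝ) ≠ 0 := ne_of_gt (n_pos C hne l')
        field_simp
      funext l
      show (_ ⬝ᵥ _) - (_ ⬝ᵥ _) = t l
      rw [hdl l, hdl i0, ht0, sub_zero]
  have hVk : k ≤ Fintype.card V := by
    have hinj : Function.Injective (fun l => (hne l).choose) := by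
      intro l1 l2 h
      simp only at h
      by_contra hne12
      exact (Finset.disjoint_left.mp (hdisj l1 l2 hne12)) (hne l1).choose_spec
        (h ▸ (hne l2).choose_spec)
    simpa using Fintype.card_le_of_injective _ hinj
  have h2 := LinearMap.finrank_range_add_finrank_ker φ
  rw [Module.finrank_fintype_fun_eq_card] at h2
  have h1 : Module.finrank ℝ (LinearMap.range φ) = k - 1 := by
    rw [hprojker]
    have h3 := LinearMap.finrank_range_add_finrank_ker
      (LinearMap.proj (R := ℝ) (φ := fun _ : Fin k => ℝ) i0)
    have hsurj : LinearMap.range (LinearMap.proj (R := ℝ) (φ := fun _ : Fin k => ℝ) i0) = ⊤ :=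
      LinearMap.range_eq_top.mpr (fun r => ⟨fun _ => r, rfl⟩)
    rw [hsurj, finrank_top, Module.finrank_self, Module.finrank_fintype_fun_eq_card,
      Fintype.card_fin] at h3
    omega
  show Module.finrank ℝ (LinearMap.range (Zstar C π).mulVecLin) = Fintype.card V - k + 1
  rw [hker]
  omega
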